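/- arXiv:1506.00190 — 4 statements merged into one kernel-verified Lean document; each statement's English description precedes it below -/
import Mathlib

section
/- Let G be a simple graph, let C be a cycle in G and let P be a path in G with V(C) ∩ V(P) = ∅. If there exists an edge (u, v) of C such that u is adjacent to the first vertex of P and v is adjacent to the last vertex of P, then G contains a cycle whose vertex set is exactly V(C) ∪ V(P). (Proposition 2 of the paper.) -/
open SimpleGraph Walk

lemma exists_path_of_cycle_edge {V : Type*} {G : SimpleGraph V} {u v : V}
    (c : G.Walk u u) (hc : c.IsCycle) (he : s(u, v) ∈ c.edges) :
    ∃ Q : G.Walk v u, Q.IsPath ∧ ∀ w, w ∈ Q.support ↔ w ∈ c.support := by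
  cases c with
  | nil => simp at he
  | cons h q =>
    rename_i x
    rw [Walk.cons_isCycle_iff] at hc
    obtain ⟨hq, hne⟩ := hc
    rw [Walk.edges_cons, List.mem_cons] at he
    rcases he with he | he
    · -- first edge is s(u,v): v = x
      rw [Sym2.eq_iff] at he
      rcases he with ⟨-, rfl⟩ | ⟨rfl, rfl⟩
      · refine ⟨q, hq, fun w => ?_⟩
        rw [Walk.support_cons, List.mem_cons]
        constructor
        · exact Or.inr
        · rintro (rfl | hw)
          · exact q.end_mem_support
          · exact hw
      · exact absurd h (G.irrefl)
    · -- s(u,v) ∈ q.edges; decompose q via its reverse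
      have hr : q.reverse.IsPath := hq.reverse
      have her : s(u, v) ∈ q.reverse.edges := by
        rw [Walk.edges_reverse, List.mem_reverse]; exact he
      -- q.reverse : Walk u x
      generalize hqr : q.reverse = r at hr her
      cases r with
      | nil => simp at her
      | cons h' r₂ =>
        rename_i y
        rw [Walk.cons_isPath_iff] at hr
        obtain ⟨hr₂, hur₂⟩ := hr
        rw [Walk.edges_cons, List.mem_cons] at her
        rcases her with her | her
        · rw [Sym2.eq_iff] at her
          rcases her with ⟨-, rfl⟩ | ⟨rfl, rfl⟩
          · -- r₂ : Walk v x, concat with h : Adj u x reversed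
            refine ⟨r₂.concat h.symm, ?_, fun w => ?_⟩
            · rw [Walk.isPath_def, Walk.concat_eq_append, Walk.support_append]
              simp only [Walk.support_cons, Walk.support_nil, List.tail_cons]
              exact List.nodup_append'.mpr ⟨hr₂.support_nodup, List.nodup_singleton u,
                by simpa [List.disjoint_singleton] using hur₂⟩
            · have hsup : ∀ z, z ∈ q.support ↔ z = u ∨ z ∈ r₂.support := fun z => by
                rw [← List.mem_reverse, ← Walk.support_reverse, hqr, Walk.support_cons,
                  List.mem_cons]
              rw [Walk.concat_eq_append, Walk.support_append, Walk.support_cons,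
                List.mem_append, Walk.support_cons, List.mem_cons, hsup w]
              simp only [Walk.support_nil, List.tail_cons, List.mem_singleton]
              tauto
          · exact absurd h' (G.irrefl)
        · exact absurd (Walk.fst_mem_support_of_mem_edges r₂ her) hur₂

lemma mem_support_iff_mem_tail_of_closed {V : Type*} {G : SimpleGraph V} {x : V}
    (c : G.Walk x x) (hnil : ¬c.Nil) : ∀ w, w ∈ c.support ↔ w ∈ c.support.tail := by
  cases c with
  | nil => simp at hnil
  | cons h q =>
    intro w
    rw [Walk.support_cons, List.mem_cons, List.tail_cons]
    constructor
    · rintro (rfl | hw)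
      · exact q.end_mem_support
      · exact hw
    · exact Or.inr

/-- Proposition 2: a cycle `C` and a vertex-disjoint path `P` such that some edge
`(u, v)` of `C` satisfies `u ~ start(P)` and `v ~ end(P)` can be concatenated
into a cycle on vertex set `V(C) ∪ V(P)`. -/
theorem cycle_path_merge {V : Type*} [Fintype V] (G : SimpleGraph V)
    {a : V} (c : G.Walk a a) (hc : c.IsCycle)
    {s t : V} (p : G.Walk s t) (hp : p.IsPath)
    (hdisj : ∀ w, w ∈ c.support → w ∉ p.support)
    (u v : V) (huv : s(u, v) ∈ c.edges)
    (hus : G.Adj u s) (hvt : G.Adj v t) :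
    ∃ (b : V) (c' : G.Walk b b), c'.IsCycle ∧
      {w | w ∈ c'.support} = {w | w ∈ c.support} ∪ {w | w ∈ p.support} := by
  classical
  have hadj : G.Adj u v := G.mem_edgeSet.mp (c.edges_subset_edgeSet huv)
  have hu : u ∈ c.support := c.fst_mem_support_of_mem_edges huv
  have hv : v ∈ c.support := c.snd_mem_support_of_mem_edges huv
  have hc₁ : (c.rotate u hu).IsCycle := hc.rotate hu
  have he₁ : s(u, v) ∈ (c.rotate u hu).edges := ((c.rotate_edges u hu).perm.mem_iff).mpr huv
  obtain ⟨Q, hQ, hQsup⟩ := exists_path_of_cycle_edge (c.rotate u hu) hc₁ he₁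
  have hQc : ∀ w, w ∈ Q.support ↔ w ∈ c.support := by
    intro w
    rw [hQsup w, mem_support_iff_mem_tail_of_closed _ hc₁.not_nil,
      mem_support_iff_mem_tail_of_closed c hc.not_nil]
    exact (c.support_rotate u hu).perm.mem_iff
  have hs : s ∉ c.support := fun h => hdisj s h p.start_mem_support
  have hup : u ∉ p.support := hdisj u hu
  refine ⟨s, Walk.cons hus.symm (Q.reverse.append (Walk.cons hvt p.reverse)), ?_, ?_⟩
  · rw [Walk.cons_isCycle_iff]
    constructor
    · rw [Walk.isPath_def, Walk.support_append, Walk.support_cons, List.tail_cons]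
      refine List.nodup_append'.mpr ⟨hQ.reverse.support_nodup, hp.reverse.support_nodup, ?_⟩
      intro w hw hw'
      rw [Walk.support_reverse, List.mem_reverse, hQc w] at hw
      rw [Walk.support_reverse, List.mem_reverse] at hw'
      exact hdisj w hw hw'
    · intro hmem
      rw [Walk.edges_append, List.mem_append, Walk.edges_cons, List.mem_cons] at hmem
      rcases hmem with hmem | hmem | hmem
      · have : s ∈ Q.reverse.support := Walk.fst_mem_support_of_mem_edges _ hmem
        rw [Walk.support_reverse, List.mem_reverse, hQc s] at this
        exact hs this
      · rw [Sym2.eq_iff] at hmem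
        rcases hmem with ⟨rfl, rfl⟩ | ⟨rfl, rfl⟩
        · exact hs hv
        · exact hadj.ne rfl
      · have : u ∈ p.reverse.support := Walk.snd_mem_support_of_mem_edges _ hmem
        rw [Walk.support_reverse, List.mem_reverse] at this
        exact hup this
  · ext w
    simp only [Set.mem_setOf_eq, Set.mem_union, Walk.support_cons, List.mem_cons,
      Walk.support_append, List.mem_append, Walk.support_reverse, List.mem_reverse,
      List.tail_cons, hQc w]
    constructor
    · rintro (rfl | hw | hw)
      · exact Or.inr p.start_mem_support
      · exact Or.inl hw
      · exact Or.inr hw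
    · rintro (hw | hw)
      · exact Or.inr (Or.inl hw)
      · exact Or.inr (Or.inr hw)
end

section
/- Let G be a simple graph and let C₁ and C₂ be two vertex-disjoint cycles of G. If there exist an edge (u₁, v₁) of C₁ and an edge (u₂, v₂) of C₂ such that u₁ is adjacent to u₂ and v₁ is adjacent to v₂, then G contains a cycle whose vertex set is exactly V(C₁) ∪ V(C₂). (Proposition 3 of the paper.) -/
open SimpleGraph Walk

private lemma head_edge {V : Type*} {G : SimpleGraph V} {u v w : V} (p : G.Walk u w)
    (hp : p.IsPath) (hv : s(u,v) ∈ p.edges) :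
    ∃ (h : G.Adj u v) (r : G.Walk v w), p = Walk.cons h r := by
  cases p with
  | nil => simp at hv
  | @cons _ y _ h r =>
    rw [Walk.cons_isPath_iff] at hp
    rw [Walk.edges_cons, List.mem_cons] at hv
    rcases hv with hv | hv
    · rw [Sym2.eq_iff] at hv
      rcases hv with ⟨_, rfl⟩ | ⟨rfl, _⟩
      · exact ⟨h, r, rfl⟩
      · exact absurd rfl h.ne
    · exact absurd (r.fst_mem_support_of_mem_edges hv) hp.2

private lemma cycle_split {V : Type*} {G : SimpleGraph V} {u v : V} (c : G.Walk u u)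
    (hc : c.IsCycle) (he : s(u,v) ∈ c.edges) :
    ∃ p : G.Walk u v, p.IsPath ∧ ∀ w, w ∈ p.support ↔ w ∈ c.support := by
  cases c with
  | nil => exact absurd hc (by simp)
  | @cons _ x _ h q =>
    rw [Walk.cons_isCycle_iff] at hc
    rw [Walk.edges_cons, List.mem_cons] at he
    rcases he with he | he
    · rw [Sym2.eq_iff] at he
      rcases he with ⟨_, rfl⟩ | ⟨rfl, rfl⟩
      · refine ⟨q.reverse, hc.1.reverse, fun w => ?_⟩
        simp only [Walk.support_reverse, List.mem_reverse, Walk.support_cons, List.mem_cons]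
        constructor
        · exact fun hw => Or.inr hw
        · rintro (rfl | hw)
          · exact q.end_mem_support
          · exact hw
      · exact absurd rfl h.ne
    · have hq : q.reverse.IsPath := hc.1.reverse
      have he' : s(u,v) ∈ q.reverse.edges := by
        rw [Walk.edges_reverse, List.mem_reverse]; exact he
      obtain ⟨h', r, hr⟩ := head_edge q.reverse hq he'
      rw [hr, Walk.cons_isPath_iff] at hq
      refine ⟨Walk.cons h r.reverse, ?_, fun w => ?_⟩
      · rw [Walk.cons_isPath_iff]
        refine ⟨hq.1.reverse, ?_⟩
        rw [Walk.support_reverse, List.mem_reverse]; exact hq.2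
      · have hqs : q.support = (Walk.cons h' r).support.reverse := by
          rw [← hr, Walk.support_reverse]; simp
        simp only [Walk.support_cons, List.mem_cons, Walk.support_reverse,
          List.mem_reverse, hqs]
        tauto

private lemma cycle_split' {V : Type*} {G : SimpleGraph V} {a u v : V} (c : G.Walk a a)
    (hc : c.IsCycle) (he : s(u,v) ∈ c.edges) :
    ∃ p : G.Walk u v, p.IsPath ∧ ∀ w, w ∈ p.support ↔ w ∈ c.support := by
  classical
  have hu : u ∈ c.support := c.fst_mem_support_of_mem_edges he
  have hc' := hc.rotate hu
  have he' : s(u,v) ∈ (c.rotate u hu).edges := (c.rotate_edges u hu).perm.mem_iff.mpr he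
  obtain ⟨p, hp, hsup⟩ := cycle_split _ hc' he'
  refine ⟨p, hp, fun w => (hsup w).trans ?_⟩
  have key : ∀ {x : V} (d : G.Walk x x), d ≠ Walk.nil → ∀ z, z ∈ d.support ↔ z ∈ d.support.tail := by
    intro x d hd z
    cases d with
    | nil => exact absurd rfl hd
    | cons h q =>
      simp only [Walk.support_cons, List.mem_cons, List.tail_cons]
      constructor
      · rintro (rfl | hz)
        · exact q.end_mem_support
        · exact hz
      · exact fun hz => Or.inr hz
  rw [key _ hc'.ne_nil, key _ hc.ne_nil, (Walk.support_rotate c u hu).perm.mem_iff]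

/-- Proposition 3: two vertex-disjoint cycles `C₁`, `C₂` with edges `(u₁, v₁) ∈ C₁`
and `(u₂, v₂) ∈ C₂` such that `u₁ ~ u₂` and `v₁ ~ v₂` can be concatenated into a
cycle on vertex set `V(C₁) ∪ V(C₂)`. -/
theorem cycle_cycle_merge {V : Type*} [Fintype V] (G : SimpleGraph V)
    {a : V} (c₁ : G.Walk a a) (hc₁ : c₁.IsCycle)
    {b : V} (c₂ : G.Walk b b) (hc₂ : c₂.IsCycle)
    (hdisj : ∀ w, w ∈ c₁.support → w ∉ c₂.support)
    (u₁ v₁ u₂ v₂ : V)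
    (h₁ : s(u₁, v₁) ∈ c₁.edges) (h₂ : s(u₂, v₂) ∈ c₂.edges)
    (huu : G.Adj u₁ u₂) (hvv : G.Adj v₁ v₂) :
    ∃ (d : V) (c' : G.Walk d d), c'.IsCycle ∧
      {w | w ∈ c'.support} = {w | w ∈ c₁.support} ∪ {w | w ∈ c₂.support} := by
  obtain ⟨p₁, hp₁, hs₁⟩ := cycle_split' c₁ hc₁ h₁
  obtain ⟨p₂, hp₂, hs₂⟩ := cycle_split' c₂ hc₂ h₂
  have hv₁ : v₁ ∈ c₁.support := c₁.snd_mem_support_of_mem_edges h₁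
  have hv₂ : v₂ ∈ c₂.support := c₂.snd_mem_support_of_mem_edges h₂
  have hne : u₁ ≠ v₁ := (c₁.adj_of_mem_edges h₁).ne
  set q : G.Walk v₂ v₁ := p₂.reverse.append (Walk.cons huu.symm p₁) with hq
  have hqsup : q.support = p₂.reverse.support ++ p₁.support := by
    rw [hq, Walk.support_append, Walk.support_cons, List.tail_cons]
  have hqpath : q.IsPath := by
    rw [Walk.isPath_def, hqsup]
    rw [List.nodup_append]
    refine ⟨hp₂.reverse.support_nodup, hp₁.support_nodup, fun x hx y hx' hxy => ?_⟩
    rw [Walk.support_reverse, List.mem_reverse, hs₂] at hx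
    rw [hs₁] at hx'
    subst hxy; exact hdisj x hx' hx
  have hqedge : s(v₁, v₂) ∉ q.edges := by
    rw [hq, Walk.edges_append, Walk.edges_cons, List.mem_append, List.mem_cons]
    rintro (hx | hx | hx)
    · rw [Walk.edges_reverse, List.mem_reverse] at hx
      have : v₁ ∈ p₂.support := p₂.fst_mem_support_of_mem_edges hx
      rw [hs₂] at this
      exact hdisj v₁ hv₁ this
    · rw [Sym2.eq_iff] at hx
      rcases hx with ⟨rfl, _⟩ | ⟨rfl, _⟩
      · exact hdisj v₁ hv₁ (c₂.fst_mem_support_of_mem_edges h₂)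
      · exact hne rfl
    · have : v₂ ∈ p₁.support := p₁.snd_mem_support_of_mem_edges hx
      rw [hs₁] at this
      exact hdisj v₂ this hv₂
  refine ⟨v₁, Walk.cons hvv q, (Walk.cons_isCycle_iff q hvv).mpr ⟨hqpath, hqedge⟩, ?_⟩
  ext w
  simp only [Set.mem_setOf_eq, Set.mem_union, Walk.support_cons, List.mem_cons, hqsup,
    List.mem_append, Walk.support_reverse, List.mem_reverse, hs₁, hs₂]
  constructor
  · rintro (rfl | hw | hw)
    · exact Or.inl hv₁
    · exact Or.inr hw
    · exact Or.inl hw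
  · rintro (hw | hw)
    · exact Or.inr (Or.inr hw)
    · exact Or.inr (Or.inl hw)
end

section
/- Every 2-connected, linear-convex supergrid graph is locally connected; that is, if G is a linear-convex supergrid graph on a finite vertex set V with |V| ≥ 3 that is connected and remains connected after deleting any single vertex, then for every vertex v of G the subgraph of G induced by the neighborhood N(v) is connected. (Theorem 1 of the paper.) -/
/-- The infinite supergrid graph `S∞` on `ℤ × ℤ`: distinct points are adjacent iff
their coordinates differ by at most 1 in each component. -/
def Supergrid : SimpleGraph (ℤ × ℤ) where
  Adj u v := u ≠ v ∧ |u.1 - v.1| ≤ 1 ∧ |u.2 - v.2| ≤ 1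
  symm := by
    constructor
    rintro u v ⟨h1, h2, h3⟩
    exact ⟨h1.symm, by rwa [abs_sub_comm], by rwa [abs_sub_comm]⟩
  loopless := by constructor; rintro u ⟨h, -⟩; exact h rfl

/-- A set `V ⊆ ℤ × ℤ` is linearly convex if along each of the four grid-line
directions, the set of parameters of points of `V` on any such line is an
interval of integers. -/
def LinearConvex (V : Set (ℤ × ℤ)) : Prop :=
  ∀ d ∈ ({(1, 0), (0, 1), (1, 1), (1, -1)} : Set (ℤ × ℤ)),
    ∀ p : ℤ × ℤ, ∀ t₁ t t₂ : ℤ, t₁ ≤ t → t ≤ t₂ →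
      p + t₁ • d ∈ V → p + t₂ • d ∈ V → p + t • d ∈ V

/-- A finite vertex set `V` (with `|V| ≥ 3`) induces a 2-connected supergrid graph
if the induced graph is connected and remains connected after deleting any single
vertex. -/
def TwoConnected (V : Finset (ℤ × ℤ)) : Prop :=
  3 ≤ V.card ∧
  (Supergrid.induce (V : Set (ℤ × ℤ))).Connected ∧
  ∀ v ∈ V, (Supergrid.induce ((V : Set (ℤ × ℤ)) \ {v})).Connected

lemma mkadj (u1 u2 w1 w2 : ℤ) (h : ¬(u1 = w1 ∧ u2 = w2)) (h1 : u1 - w1 ≤ 1)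
    (h2 : w1 - u1 ≤ 1) (h3 : u2 - w2 ≤ 1) (h4 : w2 - u2 ≤ 1) :
    Supergrid.Adj (u1, u2) (w1, w2) :=
  ⟨fun he => h ⟨congrArg Prod.fst he, congrArg Prod.snd he⟩,
    abs_le.mpr ⟨by omega, h1⟩, abs_le.mpr ⟨by omega, h3⟩⟩

lemma adjD {u w : ℤ × ℤ} (h : Supergrid.Adj u w) :
    ¬(u.1 = w.1 ∧ u.2 = w.2) ∧ u.1 - w.1 ≤ 1 ∧ w.1 - u.1 ≤ 1 ∧ u.2 - w.2 ≤ 1 ∧ w.2 - u.2 ≤ 1 := by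
  obtain ⟨hne, h1, h2⟩ := h
  have h1' := abs_le.mp h1
  have h2' := abs_le.mp h2
  exact ⟨fun he => hne (Prod.ext he.1 he.2), by omega, by omega, by omega, by omega⟩

/-- Theorem 1: every 2-connected, linear-convex supergrid graph is locally
connected: the subgraph induced by the neighborhood of each vertex is connected. -/
theorem linearConvex_twoConnected_locallyConnected (V : Finset (ℤ × ℤ))
    (hlc : LinearConvex (V : Set (ℤ × ℤ))) (h2c : TwoConnected V) :
    ∀ v : (V : Set (ℤ × ℤ)),
      ((Supergrid.induce (V : Set (ℤ × ℤ))).induce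
        ((Supergrid.induce (V : Set (ℤ × ℤ))).neighborSet v)).Connected := by
  obtain ⟨hcard, hconn, hdel⟩ := h2c
  intro v
  obtain ⟨⟨a, b⟩, hab⟩ := v
  have habV : (a, b) ∈ V := hab
  -- empty horizontal rays from convexity
  have rayH : ∀ s : ℤ, (s = 1 ∨ s = -1) → (a + s, b) ∉ (V : Set (ℤ × ℤ)) →
      ∀ q : ℤ × ℤ, q ∈ (V : Set (ℤ × ℤ)) → q.2 = b → 1 ≤ s * (q.1 - a) → False := by
    intro s hs hmiss q hq hq2 hq1
    have hqe : (a, b) + (q.1 - a) • ((1 : ℤ), (0 : ℤ)) = q := by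
      have h0 : ((a, b) + (q.1 - a) • ((1 : ℤ), (0 : ℤ))) = (a + (q.1 - a), b) := by simp
      rw [h0]
      exact Prod.ext (by show a + (q.1 - a) = q.1; omega) hq2.symm
    rcases hs with rfl | rfl
    · have := hlc (1, 0) (by simp) (a, b) 0 1 (q.1 - a) (by omega) (by omega)
        (by simpa using hab) (by rw [hqe]; exact hq)
      simp at this
      exact hmiss this
    · have := hlc (1, 0) (by simp) (a, b) (q.1 - a) (-1) 0 (by omega) (by omega)
        (by rw [hqe]; exact hq) (by simpa using hab)
      simp at this
      exact hmiss (by rw [show a + (-1 : ℤ) = a - 1 by ring]; simpa [sub_eq_add_neg] using this)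
  have rayV : ∀ t : ℤ, (t = 1 ∨ t = -1) → (a, b + t) ∉ (V : Set (ℤ × ℤ)) →
      ∀ q : ℤ × ℤ, q ∈ (V : Set (ℤ × ℤ)) → q.1 = a → 1 ≤ t * (q.2 - b) → False := by
    intro t ht hmiss q hq hq1 hq2
    have hqe : (a, b) + (q.2 - b) • ((0 : ℤ), (1 : ℤ)) = q := by
      have h0 : ((a, b) + (q.2 - b) • ((0 : ℤ), (1 : ℤ))) = (a, b + (q.2 - b)) := by simp
      rw [h0]
      exact Prod.ext hq1.symm (by show b + (q.2 - b) = q.2; omega)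
    rcases ht with rfl | rfl
    · have := hlc (0, 1) (by simp) (a, b) 0 1 (q.2 - b) (by omega) (by omega)
        (by simpa using hab) (by rw [hqe]; exact hq)
      simp at this
      exact hmiss this
    · have := hlc (0, 1) (by simp) (a, b) (q.2 - b) (-1) 0 (by omega) (by omega)
        (by rw [hqe]; exact hq) (by simpa using hab)
      simp at this
      exact hmiss (by rw [show b + (-1 : ℤ) = b - 1 by ring]; simpa [sub_eq_add_neg] using this)
  -- generic separator: a P-closed region can't connect to its complement in G - v
  have sep : ∀ P : ℤ × ℤ → Prop,
      (∀ p q : ℤ × ℤ, p ∈ (V : Set (ℤ × ℤ)) → q ∈ (V : Set (ℤ × ℤ)) → q ≠ (a, b) →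
        Supergrid.Adj p q → P p → P q) →
      ∀ c q : ℤ × ℤ, c ∈ (V : Set (ℤ × ℤ)) → c ≠ (a, b) → q ∈ (V : Set (ℤ × ℤ)) →
        q ≠ (a, b) → P c → ¬ P q → False := by
    intro P hstep c q hc hcne hq hqne hPc hPq
    obtain ⟨w⟩ := (hdel (a, b) habV).preconnected
      ⟨c, ⟨hc, hcne⟩⟩ ⟨q, ⟨hq, hqne⟩⟩
    refine hPq ?_
    suffices h : ∀ (u u' : ((V : Set (ℤ × ℤ)) \ {(a, b)} : Set (ℤ × ℤ)))
        (p : (Supergrid.induce ((V : Set (ℤ × ℤ)) \ {(a, b)})).Walk u u'), P u.1 → P u'.1 by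
      exact h _ _ w hPc
    intro u u' p
    induction p with
    | nil => exact id
    | @cons u₁ u₂ u₃ hadj p ih =>
      intro hu
      exact ih (hstep _ _ u₁.2.1 u₂.2.1 u₂.2.2 hadj hu)
  -- wedge separation at a corner
  have wedge : ∀ s t : ℤ, (s = 1 ∨ s = -1) → (t = 1 ∨ t = -1) →
      (a + s, b) ∉ (V : Set (ℤ × ℤ)) → (a, b + t) ∉ (V : Set (ℤ × ℤ)) →
      (a + s, b + t) ∈ (V : Set (ℤ × ℤ)) →
      ∀ q : ℤ × ℤ, q ∈ (V : Set (ℤ × ℤ)) → q ≠ (a, b) →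
        ¬(1 ≤ s * (q.1 - a) ∧ 1 ≤ t * (q.2 - b)) → False := by
    intro s t hs ht hm1 hm2 hc q hq hqne hqP
    refine sep (fun p => 1 ≤ s * (p.1 - a) ∧ 1 ≤ t * (p.2 - b)) ?_ (a + s, b + t) q hc
      ?_ hq hqne ⟨?_, ?_⟩ hqP
    · intro p r hp hr hrne hadj hPp
      obtain ⟨hP1, hP2⟩ := hPp
      obtain ⟨-, d1, d2, d3, d4⟩ := adjD hadj
      have hr1 : r.1 = a ∨ 1 ≤ s * (r.1 - a) := by rcases hs with rfl | rfl <;> omega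
      have hr2 : r.2 = b ∨ 1 ≤ t * (r.2 - b) := by rcases ht with rfl | rfl <;> omega
      rcases hr1 with hr1 | hr1
      · rcases hr2 with hr2 | hr2
        · exact absurd (Prod.ext hr1 hr2) hrne
        · exact absurd (rayV t ht hm2 r hr hr1 hr2) id
      · rcases hr2 with hr2 | hr2
        · exact absurd (rayH s hs hm1 r hr hr2 hr1) id
        · exact ⟨hr1, hr2⟩
    · intro he
      have h1 : a + s = a := congrArg Prod.fst he
      rcases hs with rfl | rfl <;> omega
    · show 1 ≤ s * (a + s - a)
      rcases hs with rfl | rfl <;> omega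
    · show 1 ≤ t * (b + t - b)
      rcases ht with rfl | rfl <;> omega
  -- half-plane separation: empty column
  have halfH : ∀ s : ℤ, (s = 1 ∨ s = -1) →
      (a, b + 1) ∉ (V : Set (ℤ × ℤ)) → (a, b - 1) ∉ (V : Set (ℤ × ℤ)) →
      (a + s, b) ∈ (V : Set (ℤ × ℤ)) →
      ∀ q : ℤ × ℤ, q ∈ (V : Set (ℤ × ℤ)) → q ≠ (a, b) → ¬(1 ≤ s * (q.1 - a)) → False := by
    intro s hs hm1 hm2 hc q hq hqne hqP
    have hm2' : (a, b + (-1 : ℤ)) ∉ (V : Set (ℤ × ℤ)) := by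
      rw [show b + (-1 : ℤ) = b - 1 by ring]; exact hm2
    refine sep (fun p => 1 ≤ s * (p.1 - a)) ?_ (a + s, b) q hc ?_ hq hqne ?_ hqP
    · intro p r hp hr hrne hadj hPp
      obtain ⟨-, d1, d2, d3, d4⟩ := adjD hadj
      have hr1 : r.1 = a ∨ 1 ≤ s * (r.1 - a) := by rcases hs with rfl | rfl <;> omega
      rcases hr1 with hr1 | hr1
      · have hr2 : r.2 = b ∨ 1 ≤ 1 * (r.2 - b) ∨ 1 ≤ (-1 : ℤ) * (r.2 - b) := by omega
        rcases hr2 with hr2 | hr2 | hr2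
        · exact absurd (Prod.ext hr1 hr2) hrne
        · exact absurd (rayV 1 (Or.inl rfl) hm1 r hr hr1 hr2) id
        · exact absurd (rayV (-1) (Or.inr rfl) hm2' r hr hr1 hr2) id
      · exact hr1
    · intro he
      have h1 : a + s = a := congrArg Prod.fst he
      rcases hs with rfl | rfl <;> omega
    · show 1 ≤ s * (a + s - a)
      rcases hs with rfl | rfl <;> omega
  -- half-plane separation: empty row
  have halfV : ∀ t : ℤ, (t = 1 ∨ t = -1) →
      (a + 1, b) ∉ (V : Set (ℤ × ℤ)) → (a - 1, b) ∉ (V : Set (ℤ × ℤ)) →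
      (a, b + t) ∈ (V : Set (ℤ × ℤ)) →
      ∀ q : ℤ × ℤ, q ∈ (V : Set (ℤ × ℤ)) → q ≠ (a, b) → ¬(1 ≤ t * (q.2 - b)) → False := by
    intro t ht hm1 hm2 hc q hq hqne hqP
    have hm2' : (a + (-1 : ℤ), b) ∉ (V : Set (ℤ × ℤ)) := by
      rw [show a + (-1 : ℤ) = a - 1 by ring]; exact hm2
    refine sep (fun p => 1 ≤ t * (p.2 - b)) ?_ (a, b + t) q hc ?_ hq hqne ?_ hqP
    · intro p r hp hr hrne hadj hPp
      obtain ⟨-, d1, d2, d3, d4⟩ := adjD hadj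
      have hr2 : r.2 = b ∨ 1 ≤ t * (r.2 - b) := by rcases ht with rfl | rfl <;> omega
      rcases hr2 with hr2 | hr2
      · have hr1 : r.1 = a ∨ 1 ≤ 1 * (r.1 - a) ∨ 1 ≤ (-1 : ℤ) * (r.1 - a) := by omega
        rcases hr1 with hr1 | hr1 | hr1
        · exact absurd (Prod.ext hr1 hr2) hrne
        · exact absurd (rayH 1 (Or.inl rfl) hm1 r hr hr2 hr1) id
        · exact absurd (rayH (-1) (Or.inr rfl) hm2' r hr hr2 hr1) id
      · exact hr2
    · intro he
      have h1 : b + t = b := congrArg Prod.snd he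
      rcases ht with rfl | rfl <;> omega
    · show 1 ≤ t * (b + t - b)
      rcases ht with rfl | rfl <;> omega
  -- set up the neighborhood graph
  classical
  set G := Supergrid.induce (V : Set (ℤ × ℤ)) with hG
  set NB := G.neighborSet (⟨(a, b), hab⟩ : (V : Set (ℤ × ℤ))) with hNB
  have hadjv : ∀ z : NB, Supergrid.Adj (a, b) z.1.1 := fun z => z.2
  have hbnd : ∀ z : NB, ¬(a = z.1.1.1 ∧ b = z.1.1.2) ∧ a - z.1.1.1 ≤ 1 ∧
      z.1.1.1 - a ≤ 1 ∧ b - z.1.1.2 ≤ 1 ∧ z.1.1.2 - b ≤ 1 := fun z => adjD (hadjv z)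
  have hadjH : ∀ x y : NB, Supergrid.Adj x.1.1 y.1.1 → (G.induce NB).Adj x y := fun _ _ h => h
  have hqnev : ∀ z : NB, z.1.1 ≠ (a, b) := fun z => ((hadjv z).1).symm
  -- nonempty
  obtain ⟨u, huV, hune⟩ : ∃ u, u ∈ (V : Set (ℤ × ℤ)) ∧ u ≠ (a, b) := by
    have h2 : 0 < (V.erase (a, b)).card := by
      rw [Finset.card_erase_of_mem habV]; omega
    obtain ⟨u, hu⟩ := Finset.card_pos.mp h2
    exact ⟨u, (Finset.mem_erase.mp hu).2, (Finset.mem_erase.mp hu).1⟩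
  have hvune : (⟨(a, b), hab⟩ : (V : Set (ℤ × ℤ))) ≠ ⟨u, huV⟩ :=
    fun h => hune (congrArg Subtype.val h).symm
  obtain ⟨w0⟩ := hconn.preconnected ⟨(a, b), hab⟩ ⟨u, huV⟩
  have hx0 := w0.adj_snd (SimpleGraph.Walk.not_nil_of_ne hvune)
  have x0 : NB := ⟨w0.getVert 1, hx0⟩
  -- reduction of a non-reachable pair to one with an edge-type first vertex
  have reduce : ∀ x y : NB, ¬ (G.induce NB).Reachable x y →
      ∃ x' : NB, ¬ (G.induce NB).Reachable x' y ∧ (x'.1.1.1 = a ∨ x'.1.1.2 = b) := by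
    intro x y hR
    obtain ⟨hne0, d1, d2, d3, d4⟩ := hbnd x
    by_cases hp1 : x.1.1.1 = a
    · exact ⟨x, hR, Or.inl hp1⟩
    by_cases hp2 : x.1.1.2 = b
    · exact ⟨x, hR, Or.inr hp2⟩
    obtain ⟨s, hsdef⟩ : ∃ s : ℤ, s = x.1.1.1 - a := ⟨_, rfl⟩
    obtain ⟨t, htdef⟩ : ∃ t : ℤ, t = x.1.1.2 - b := ⟨_, rfl⟩
    have hs : s = 1 ∨ s = -1 := by omega
    have ht : t = 1 ∨ t = -1 := by omega
    have hpeq : x.1.1 = (a + s, b + t) := by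
      have f1 : x.1.1.1 = a + s := by omega
      have f2 : x.1.1.2 = b + t := by omega
      exact Prod.ext f1 f2
    by_cases h1 : (a + s, b) ∈ (V : Set (ℤ × ℤ))
    · have hadj1 : Supergrid.Adj (a, b) (a + s, b) :=
        mkadj a b (a + s) b (by rintro ⟨h, -⟩; omega) (by omega) (by omega) (by omega) (by omega)
      have hadjx : Supergrid.Adj x.1.1 (a + s, b) := by
        rw [hpeq]
        exact mkadj (a + s) (b + t) (a + s) b (by rintro ⟨-, h⟩; omega)
          (by omega) (by omega) (by omega) (by omega)
      exact ⟨⟨⟨(a + s, b), h1⟩, hadj1⟩,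
        fun hr => hR ((SimpleGraph.Adj.reachable (hadjH x _ hadjx)).trans hr), Or.inr rfl⟩
    by_cases h2 : (a, b + t) ∈ (V : Set (ℤ × ℤ))
    · have hadj2 : Supergrid.Adj (a, b) (a, b + t) :=
        mkadj a b a (b + t) (by rintro ⟨-, h⟩; omega) (by omega) (by omega) (by omega) (by omega)
      have hadjx : Supergrid.Adj x.1.1 (a, b + t) := by
        rw [hpeq]
        exact mkadj (a + s) (b + t) a (b + t) (by rintro ⟨h, -⟩; omega)
          (by omega) (by omega) (by omega) (by omega)
      exact ⟨⟨⟨(a, b + t), h2⟩, hadj2⟩,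
        fun hr => hR ((SimpleGraph.Adj.reachable (hadjH x _ hadjx)).trans hr), Or.inl rfl⟩
    -- corner with both neighbors missing: wedge separation
    exfalso
    have hxV : (a + s, b + t) ∈ (V : Set (ℤ × ℤ)) := by rw [← hpeq]; exact x.1.2
    obtain ⟨hne0y, e1, e2, e3, e4⟩ := hbnd y
    apply wedge s t hs ht h1 h2 hxV y.1.1 y.1.2 (hqnev y)
    rintro ⟨c1, c2⟩
    have f1 : y.1.1.1 = a + s := by rcases hs with rfl | rfl <;> omega
    have f2 : y.1.1.2 = b + t := by rcases ht with rfl | rfl <;> omega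
    have hxy : x = y := Subtype.ext (Subtype.ext (hpeq.trans (Prod.ext f1 f2).symm))
    exact hR (by rw [hxy])
  -- classification of edge-type vertices
  have shape : ∀ z : NB, (z.1.1.1 = a ∨ z.1.1.2 = b) →
      z.1.1 = (a + 1, b) ∨ z.1.1 = (a - 1, b) ∨ z.1.1 = (a, b + 1) ∨ z.1.1 = (a, b - 1) := by
    intro z hz
    obtain ⟨hne0, d1, d2, d3, d4⟩ := hbnd z
    have h4 : (z.1.1.1 = a + 1 ∧ z.1.1.2 = b) ∨ (z.1.1.1 = a - 1 ∧ z.1.1.2 = b) ∨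
        (z.1.1.1 = a ∧ z.1.1.2 = b + 1) ∨ (z.1.1.1 = a ∧ z.1.1.2 = b - 1) := by
      rcases hz with h | h <;> omega
    rcases h4 with ⟨u1, u2⟩ | ⟨u1, u2⟩ | ⟨u1, u2⟩ | ⟨u1, u2⟩
    · exact Or.inl (Prod.ext u1 u2)
    · exact Or.inr (Or.inl (Prod.ext u1 u2))
    · exact Or.inr (Or.inr (Or.inl (Prod.ext u1 u2)))
    · exact Or.inr (Or.inr (Or.inr (Prod.ext u1 u2)))
  -- direct adjacency discharge
  have adjcase : ∀ (x y : NB) (P Q : ℤ × ℤ), x.1.1 = P → y.1.1 = Q → Supergrid.Adj P Q →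
      ¬ (G.induce NB).Reachable x y → False := by
    intro x y P Q hP hQ hA hR
    exact hR (SimpleGraph.Adj.reachable (hadjH x y (by rw [hP, hQ]; exact hA)))
  -- two-step reachability through a middle vertex
  have midcase : ∀ (x y : NB) (P Q M : ℤ × ℤ), x.1.1 = P → y.1.1 = Q →
      (hM : M ∈ (V : Set (ℤ × ℤ))) → Supergrid.Adj (a, b) M → Supergrid.Adj P M →
      Supergrid.Adj M Q → ¬ (G.induce NB).Reachable x y → False := by
    intro x y P Q M hP hQ hM hMv hPM hMQ hR
    exact hR ((SimpleGraph.Adj.reachable (hadjH x ⟨⟨M, hM⟩, hMv⟩ (by rw [hP]; exact hPM))).trans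
      (SimpleGraph.Adj.reachable (hadjH ⟨⟨M, hM⟩, hMv⟩ y (by rw [hQ]; exact hMQ))))
  have edgecase : ∀ x y : NB, (x.1.1.1 = a ∨ x.1.1.2 = b) → (y.1.1.1 = a ∨ y.1.1.2 = b) →
      ¬ (G.induce NB).Reachable x y → False := by
    intro x y hx hy hR
    have hxy : x.1.1 ≠ y.1.1 := fun h => hR (by rw [show x = y from Subtype.ext (Subtype.ext h)])
    rcases shape x hx with hpx | hpx | hpx | hpx <;> rcases shape y hy with hpy | hpy | hpy | hpy
    · exact hxy (hpx.trans hpy.symm)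
    · by_cases hU : (a, b + 1) ∈ (V : Set (ℤ × ℤ))
      · exact midcase x y _ _ (a, b + 1) hpx hpy hU
          (mkadj _ _ _ _ (by rintro ⟨h1x, h2x⟩; omega) (by omega) (by omega) (by omega) (by omega))
          (mkadj _ _ _ _ (by rintro ⟨h1x, h2x⟩; omega) (by omega) (by omega) (by omega) (by omega))
          (mkadj _ _ _ _ (by rintro ⟨h1x, h2x⟩; omega) (by omega) (by omega) (by omega) (by omega)) hR
      by_cases hD : (a, b - 1) ∈ (V : Set (ℤ × ℤ))
      · exact midcase x y _ _ (a, b - 1) hpx hpy hD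
          (mkadj _ _ _ _ (by rintro ⟨h1x, h2x⟩; omega) (by omega) (by omega) (by omega) (by omega))
          (mkadj _ _ _ _ (by rintro ⟨h1x, h2x⟩; omega) (by omega) (by omega) (by omega) (by omega))
          (mkadj _ _ _ _ (by rintro ⟨h1x, h2x⟩; omega) (by omega) (by omega) (by omega) (by omega)) hR
      have hy1 : y.1.1.1 = a - 1 := by rw [hpy]
      exact halfH 1 (Or.inl rfl) hU hD (by rw [← hpx]; exact x.1.2) y.1.1 y.1.2 (hqnev y) (by omega)
    · exact adjcase x y _ _ hpx hpy (mkadj _ _ _ _ (by rintro ⟨h1x, h2x⟩; omega)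
        (by omega) (by omega) (by omega) (by omega)) hR
    · exact adjcase x y _ _ hpx hpy (mkadj _ _ _ _ (by rintro ⟨h1x, h2x⟩; omega)
        (by omega) (by omega) (by omega) (by omega)) hR
    · by_cases hU : (a, b + 1) ∈ (V : Set (ℤ × ℤ))
      · exact midcase x y _ _ (a, b + 1) hpx hpy hU
          (mkadj _ _ _ _ (by rintro ⟨h1x, h2x⟩; omega) (by omega) (by omega) (by omega) (by omega))
          (mkadj _ _ _ _ (by rintro ⟨h1x, h2x⟩; omega) (by omega) (by omega) (by omega) (by omega))
          (mkadj _ _ _ _ (by rintro ⟨h1x, h2x⟩; omega) (by omega) (by omega) (by omega) (by omega)) hR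
      by_cases hD : (a, b - 1) ∈ (V : Set (ℤ × ℤ))
      · exact midcase x y _ _ (a, b - 1) hpx hpy hD
          (mkadj _ _ _ _ (by rintro ⟨h1x, h2x⟩; omega) (by omega) (by omega) (by omega) (by omega))
          (mkadj _ _ _ _ (by rintro ⟨h1x, h2x⟩; omega) (by omega) (by omega) (by omega) (by omega))
          (mkadj _ _ _ _ (by rintro ⟨h1x, h2x⟩; omega) (by omega) (by omega) (by omega) (by omega)) hR
      have hy1 : y.1.1.1 = a - (-1) := by rw [hpy]; ring
      exact halfH (-1) (Or.inr rfl) hU hD (by rw [show a + (-1 : ℤ) = a - 1 by ring, ← hpx]; exact x.1.2) y.1.1 y.1.2 (hqnev y) (by omega)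
    · exact hxy (hpx.trans hpy.symm)
    · exact adjcase x y _ _ hpx hpy (mkadj _ _ _ _ (by rintro ⟨h1x, h2x⟩; omega)
        (by omega) (by omega) (by omega) (by omega)) hR
    · exact adjcase x y _ _ hpx hpy (mkadj _ _ _ _ (by rintro ⟨h1x, h2x⟩; omega)
        (by omega) (by omega) (by omega) (by omega)) hR
    · exact adjcase x y _ _ hpx hpy (mkadj _ _ _ _ (by rintro ⟨h1x, h2x⟩; omega)
        (by omega) (by omega) (by omega) (by omega)) hR
    · exact adjcase x y _ _ hpx hpy (mkadj _ _ _ _ (by rintro ⟨h1x, h2x⟩; omega)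
        (by omega) (by omega) (by omega) (by omega)) hR
    · exact hxy (hpx.trans hpy.symm)
    · by_cases hU : (a + 1, b) ∈ (V : Set (ℤ × ℤ))
      · exact midcase x y _ _ (a + 1, b) hpx hpy hU
          (mkadj _ _ _ _ (by rintro ⟨h1x, h2x⟩; omega) (by omega) (by omega) (by omega) (by omega))
          (mkadj _ _ _ _ (by rintro ⟨h1x, h2x⟩; omega) (by omega) (by omega) (by omega) (by omega))
          (mkadj _ _ _ _ (by rintro ⟨h1x, h2x⟩; omega) (by omega) (by omega) (by omega) (by omega)) hR
      by_cases hD : (a - 1, b) ∈ (V : Set (ℤ × ℤ))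
      · exact midcase x y _ _ (a - 1, b) hpx hpy hD
          (mkadj _ _ _ _ (by rintro ⟨h1x, h2x⟩; omega) (by omega) (by omega) (by omega) (by omega))
          (mkadj _ _ _ _ (by rintro ⟨h1x, h2x⟩; omega) (by omega) (by omega) (by omega) (by omega))
          (mkadj _ _ _ _ (by rintro ⟨h1x, h2x⟩; omega) (by omega) (by omega) (by omega) (by omega)) hR
      have hy2 : y.1.1.2 = b - 1 := by rw [hpy]
      exact halfV 1 (Or.inl rfl) hU hD (by rw [← hpx]; exact x.1.2) y.1.1 y.1.2 (hqnev y) (by omega)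
    · exact adjcase x y _ _ hpx hpy (mkadj _ _ _ _ (by rintro ⟨h1x, h2x⟩; omega)
        (by omega) (by omega) (by omega) (by omega)) hR
    · exact adjcase x y _ _ hpx hpy (mkadj _ _ _ _ (by rintro ⟨h1x, h2x⟩; omega)
        (by omega) (by omega) (by omega) (by omega)) hR
    · by_cases hU : (a + 1, b) ∈ (V : Set (ℤ × ℤ))
      · exact midcase x y _ _ (a + 1, b) hpx hpy hU
          (mkadj _ _ _ _ (by rintro ⟨h1x, h2x⟩; omega) (by omega) (by omega) (by omega) (by omega))
          (mkadj _ _ _ _ (by rintro ⟨h1x, h2x⟩; omega) (by omega) (by omega) (by omega) (by omega))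
          (mkadj _ _ _ _ (by rintro ⟨h1x, h2x⟩; omega) (by omega) (by omega) (by omega) (by omega)) hR
      by_cases hD : (a - 1, b) ∈ (V : Set (ℤ × ℤ))
      · exact midcase x y _ _ (a - 1, b) hpx hpy hD
          (mkadj _ _ _ _ (by rintro ⟨h1x, h2x⟩; omega) (by omega) (by omega) (by omega) (by omega))
          (mkadj _ _ _ _ (by rintro ⟨h1x, h2x⟩; omega) (by omega) (by omega) (by omega) (by omega))
          (mkadj _ _ _ _ (by rintro ⟨h1x, h2x⟩; omega) (by omega) (by omega) (by omega) (by omega)) hR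
      have hy2 : y.1.1.2 = b - (-1) := by rw [hpy]; ring
      exact halfV (-1) (Or.inr rfl) hU hD (by rw [show b + (-1 : ℤ) = b - 1 by ring, ← hpx]; exact x.1.2) y.1.1 y.1.2 (hqnev y) (by omega)
    · exact hxy (hpx.trans hpy.symm)
  have main : ∀ x y : NB, ¬ (G.induce NB).Reachable x y → False := by
    intro x y hR
    obtain ⟨x', hRx, hx'⟩ := reduce x y hR
    obtain ⟨y', hRy, hy'⟩ := reduce y x' (fun h => hRx h.symm)
    exact edgecase x' y' hx' hy' (fun h => hRy h.symm)
  haveI : Nonempty NB := ⟨x0⟩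
  exact SimpleGraph.Connected.mk fun x y => not_not.mp fun hR => main x y hR
end

section
/- In a 2-connected, linear-convex supergrid graph G, every vertex u has two neighbors v and w that are adjacent to each other; in particular every vertex of G lies on a triangle. (Proved in the paper as the key step deriving Corollary 1 from Theorem 1.) -/
lemma supergrid_adj_iff (u v : ℤ × ℤ) :
    Supergrid.Adj u v ↔ u ≠ v ∧ |u.1 - v.1| ≤ 1 ∧ |u.2 - v.2| ≤ 1 := Iff.rfl

lemma supergrid_adj_of (u v : ℤ × ℤ) (h1 : u.1 ≠ v.1 ∨ u.2 ≠ v.2)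
    (h2 : -1 ≤ u.1 - v.1) (h3 : u.1 - v.1 ≤ 1) (h4 : -1 ≤ u.2 - v.2) (h5 : u.2 - v.2 ≤ 1) :
    Supergrid.Adj u v := by
  refine ⟨?_, abs_le.2 ⟨h2, h3⟩, abs_le.2 ⟨h4, h5⟩⟩
  intro h
  rcases h1 with h1 | h1 <;> exact h1 (by rw [h])

lemma supergrid_adj_bounds {u v : ℤ × ℤ} (h : Supergrid.Adj u v) :
    -1 ≤ u.1 - v.1 ∧ u.1 - v.1 ≤ 1 ∧ -1 ≤ u.2 - v.2 ∧ u.2 - v.2 ≤ 1 :=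
  ⟨(abs_le.1 h.2.1).1, (abs_le.1 h.2.1).2, (abs_le.1 h.2.2).1, (abs_le.1 h.2.2).2⟩

/-- Discrete intermediate value theorem for the first coordinate along a walk. -/
lemma walk_ivt_fst (S : Set (ℤ × ℤ)) (c : ℤ) :
    ∀ (a b : S) (p : (Supergrid.induce S).Walk a b),
      (a : ℤ × ℤ).1 ≤ c → c ≤ (b : ℤ × ℤ).1 → ∃ x ∈ p.support, (x : ℤ × ℤ).1 = c := by
  intro a b p
  induction p with
  | nil => intro h1 h2; exact ⟨_, by simp, le_antisymm h1 h2⟩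
  | @cons a a' b h p ih =>
    intro h1 h2
    rcases eq_or_lt_of_le h1 with he | hlt
    · exact ⟨_, by simp, he⟩
    · have hadj : Supergrid.Adj (a : ℤ × ℤ) (a' : ℤ × ℤ) := h
      have hb := supergrid_adj_bounds hadj
      have hle : (a' : ℤ × ℤ).1 ≤ c := by omega
      obtain ⟨x, hx, hxc⟩ := ih hle h2
      exact ⟨x, by simp [hx], hxc⟩

/-- Discrete intermediate value theorem for the second coordinate along a walk. -/
lemma walk_ivt_snd (S : Set (ℤ × ℤ)) (c : ℤ) :
    ∀ (a b : S) (p : (Supergrid.induce S).Walk a b),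
      (a : ℤ × ℤ).2 ≤ c → c ≤ (b : ℤ × ℤ).2 → ∃ x ∈ p.support, (x : ℤ × ℤ).2 = c := by
  intro a b p
  induction p with
  | nil => intro h1 h2; exact ⟨_, by simp, le_antisymm h1 h2⟩
  | @cons a a' b h p ih =>
    intro h1 h2
    rcases eq_or_lt_of_le h1 with he | hlt
    · exact ⟨_, by simp, he⟩
    · have hadj : Supergrid.Adj (a : ℤ × ℤ) (a' : ℤ × ℤ) := h
      have hb := supergrid_adj_bounds hadj
      have hle : (a' : ℤ × ℤ).2 ≤ c := by omega
      obtain ⟨x, hx, hxc⟩ := ih hle h2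
      exact ⟨x, by simp [hx], hxc⟩

lemma main_x (V : Finset (ℤ × ℤ)) (hlc : LinearConvex (V : Set (ℤ × ℤ)))
    (u v w : ℤ × ℤ) (hu : u ∈ V) (hv : v ∈ V) (hw : w ∈ V)
    (hconn : (Supergrid.induce ((V : Set (ℤ × ℤ)) \ {u})).Connected)
    (H : ∀ a ∈ V, ∀ b ∈ V, Supergrid.Adj u a → Supergrid.Adj u b → ¬ Supergrid.Adj a b)
    (hav : Supergrid.Adj u v) (haw : Supergrid.Adj u w)
    (hv1 : v.1 = u.1 - 1) (hw1 : w.1 = u.1 + 1) : False := by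
  have hbv := supergrid_adj_bounds hav
  have hbw := supergrid_adj_bounds haw
  -- the points directly above and below u are not in V
  have key : ∀ ε : ℤ, ε = 1 ∨ ε = -1 → ((u.1, u.2 + ε) ∈ V → False) := by
    intro ε hε hq
    have haq : Supergrid.Adj u (u.1, u.2 + ε) :=
      supergrid_adj_of _ _ (Or.inr (by simp; omega)) (by simp) (by simp) (by simp; omega)
        (by simp; omega)
    have hv2 : v.2 = u.2 - ε := by
      by_contra hne
      exact H v hv (u.1, u.2 + ε) hq hav haq
        (supergrid_adj_of _ _ (Or.inl (by simp; omega)) (by simp; omega) (by simp; omega)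
          (by simp; omega) (by simp; omega))
    have hw2 : w.2 = u.2 - ε := by
      by_contra hne
      exact H w hw (u.1, u.2 + ε) hq haw haq
        (supergrid_adj_of _ _ (Or.inl (by simp; omega)) (by simp; omega) (by simp; omega)
          (by simp; omega) (by simp; omega))
    have hm : (u.1, u.2 - ε) ∈ (V : Set (ℤ × ℤ)) := by
      have h0 : v + (0 : ℤ) • ((1 : ℤ), (0 : ℤ)) ∈ (V : Set (ℤ × ℤ)) := by
        simpa using (Finset.mem_coe.2 hv)
      have h2 : v + (2 : ℤ) • ((1 : ℤ), (0 : ℤ)) ∈ (V : Set (ℤ × ℤ)) := by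
        have : v + (2 : ℤ) • ((1 : ℤ), (0 : ℤ)) = w := by
          simp [Prod.ext_iff]; omega
        rw [this]; exact Finset.mem_coe.2 hw
      have := hlc (1, 0) (by simp) v 0 1 2 (by norm_num) (by norm_num) h0 h2
      have heq : v + (1 : ℤ) • ((1 : ℤ), (0 : ℤ)) = (u.1, u.2 - ε) := by
        simp [Prod.ext_iff]; omega
      rwa [heq] at this
    exact H v hv (u.1, u.2 - ε) (Finset.mem_coe.1 hm) hav
      (supergrid_adj_of _ _ (Or.inr (by simp; omega)) (by simp) (by simp) (by simp; omega)
        (by simp; omega))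
      (supergrid_adj_of _ _ (Or.inl (by simp; omega)) (by simp; omega) (by simp; omega)
        (by simp; omega) (by simp; omega))
  -- the walk from v to w in V \ {u} crosses the column of u
  have hvS : v ∈ ((V : Set (ℤ × ℤ)) \ {u}) := ⟨Finset.mem_coe.2 hv, by simp; exact fun h => hav.1 h.symm⟩
  have hwS : w ∈ ((V : Set (ℤ × ℤ)) \ {u}) := ⟨Finset.mem_coe.2 hw, by simp; exact fun h => haw.1 h.symm⟩
  obtain ⟨p⟩ := hconn.preconnected ⟨v, hvS⟩ ⟨w, hwS⟩
  obtain ⟨x, -, hx1⟩ := walk_ivt_fst _ u.1 _ _ p (by simp; omega) (by simp; omega)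
  obtain ⟨hxV, hxne⟩ := x.2
  have hxne' : (x : ℤ × ℤ) ≠ u := by simpa using hxne
  have hxeq : ∀ y : ℤ × ℤ, (x : ℤ × ℤ).1 = y.1 → (x : ℤ × ℤ).2 = y.2 → (x : ℤ × ℤ) = y :=
    fun y h1 h2 => Prod.ext_iff.2 ⟨h1, h2⟩
  have hx2 : (x : ℤ × ℤ).2 ≠ u.2 := by
    intro h; exact hxne' (hxeq u hx1 h)
  have hxup : (x : ℤ × ℤ).2 ≠ u.2 + 1 := by
    intro h
    have he : (x : ℤ × ℤ) = (u.1, u.2 + 1) := hxeq _ hx1 h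
    exact key 1 (Or.inl rfl) (he ▸ Finset.mem_coe.1 hxV)
  have hxdown : (x : ℤ × ℤ).2 ≠ u.2 - 1 := by
    intro h
    have he : (x : ℤ × ℤ) = (u.1, u.2 + (-1)) := hxeq _ hx1 (by omega)
    exact key (-1) (Or.inr rfl) (he ▸ Finset.mem_coe.1 hxV)
  rcases lt_or_gt_of_ne hx2 with hlt | hgt
  · -- x.2 ≤ u.2 - 2 ; use convexity along (0,1) downwards
    have h0 : u + (0 : ℤ) • ((0 : ℤ), (1 : ℤ)) ∈ (V : Set (ℤ × ℤ)) := by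
      simpa using (Finset.mem_coe.2 hu)
    have hx : u + ((x : ℤ × ℤ).2 - u.2) • ((0 : ℤ), (1 : ℤ)) ∈ (V : Set (ℤ × ℤ)) := by
      have : u + ((x : ℤ × ℤ).2 - u.2) • ((0 : ℤ), (1 : ℤ)) = (x : ℤ × ℤ) := by
        simp [Prod.ext_iff]; omega
      rw [this]; exact hxV
    have := hlc (0, 1) (by simp) u ((x : ℤ × ℤ).2 - u.2) (-1) 0 (by omega) (by norm_num) hx h0
    have heq : u + (-1 : ℤ) • ((0 : ℤ), (1 : ℤ)) = (u.1, u.2 + (-1)) := by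
      simp [Prod.ext_iff]
    rw [heq] at this
    exact key (-1) (Or.inr rfl) (Finset.mem_coe.1 this)
  · have h0 : u + (0 : ℤ) • ((0 : ℤ), (1 : ℤ)) ∈ (V : Set (ℤ × ℤ)) := by
      simpa using (Finset.mem_coe.2 hu)
    have hx : u + ((x : ℤ × ℤ).2 - u.2) • ((0 : ℤ), (1 : ℤ)) ∈ (V : Set (ℤ × ℤ)) := by
      have : u + ((x : ℤ × ℤ).2 - u.2) • ((0 : ℤ), (1 : ℤ)) = (x : ℤ × ℤ) := by
        simp [Prod.ext_iff]; omega
      rw [this]; exact hxV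
    have := hlc (0, 1) (by simp) u 0 1 ((x : ℤ × ℤ).2 - u.2) (by norm_num) (by omega) h0 hx
    have heq : u + (1 : ℤ) • ((0 : ℤ), (1 : ℤ)) = (u.1, u.2 + 1) := by
      simp [Prod.ext_iff]
    rw [heq] at this
    exact key 1 (Or.inl rfl) (Finset.mem_coe.1 this)

lemma main_y (V : Finset (ℤ × ℤ)) (hlc : LinearConvex (V : Set (ℤ × ℤ)))
    (u v w : ℤ × ℤ) (hu : u ∈ V) (hv : v ∈ V) (hw : w ∈ V)
    (hconn : (Supergrid.induce ((V : Set (ℤ × ℤ)) \ {u})).Connected)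
    (H : ∀ a ∈ V, ∀ b ∈ V, Supergrid.Adj u a → Supergrid.Adj u b → ¬ Supergrid.Adj a b)
    (hav : Supergrid.Adj u v) (haw : Supergrid.Adj u w)
    (hv1 : v.2 = u.2 - 1) (hw1 : w.2 = u.2 + 1) : False := by
  have hbv := supergrid_adj_bounds hav
  have hbw := supergrid_adj_bounds haw
  have key : ∀ ε : ℤ, ε = 1 ∨ ε = -1 → ((u.1 + ε, u.2) ∈ V → False) := by
    intro ε hε hq
    have haq : Supergrid.Adj u (u.1 + ε, u.2) :=
      supergrid_adj_of _ _ (Or.inl (by simp; omega)) (by simp; omega) (by simp; omega) (by simp)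
        (by simp)
    have hv2 : v.1 = u.1 - ε := by
      by_contra hne
      exact H v hv (u.1 + ε, u.2) hq hav haq
        (supergrid_adj_of _ _ (Or.inr (by simp; omega)) (by simp; omega) (by simp; omega)
          (by simp; omega) (by simp; omega))
    have hw2 : w.1 = u.1 - ε := by
      by_contra hne
      exact H w hw (u.1 + ε, u.2) hq haw haq
        (supergrid_adj_of _ _ (Or.inr (by simp; omega)) (by simp; omega) (by simp; omega)
          (by simp; omega) (by simp; omega))
    have hm : (u.1 - ε, u.2) ∈ (V : Set (ℤ × ℤ)) := by
      have h0 : v + (0 : ℤ) • ((0 : ℤ), (1 : ℤ)) ∈ (V : Set (ℤ × ℤ)) := by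
        simpa using (Finset.mem_coe.2 hv)
      have h2 : v + (2 : ℤ) • ((0 : ℤ), (1 : ℤ)) ∈ (V : Set (ℤ × ℤ)) := by
        have : v + (2 : ℤ) • ((0 : ℤ), (1 : ℤ)) = w := by
          simp [Prod.ext_iff]; omega
        rw [this]; exact Finset.mem_coe.2 hw
      have := hlc (0, 1) (by simp) v 0 1 2 (by norm_num) (by norm_num) h0 h2
      have heq : v + (1 : ℤ) • ((0 : ℤ), (1 : ℤ)) = (u.1 - ε, u.2) := by
        simp [Prod.ext_iff]; omega
      rwa [heq] at this
    exact H v hv (u.1 - ε, u.2) (Finset.mem_coe.1 hm) hav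
      (supergrid_adj_of _ _ (Or.inl (by simp; omega)) (by simp; omega) (by simp; omega)
        (by simp) (by simp))
      (supergrid_adj_of _ _ (Or.inr (by simp; omega)) (by simp; omega) (by simp; omega)
        (by simp; omega) (by simp; omega))
  have hvS : v ∈ ((V : Set (ℤ × ℤ)) \ {u}) := ⟨Finset.mem_coe.2 hv, by simp; exact fun h => hav.1 h.symm⟩
  have hwS : w ∈ ((V : Set (ℤ × ℤ)) \ {u}) := ⟨Finset.mem_coe.2 hw, by simp; exact fun h => haw.1 h.symm⟩
  obtain ⟨p⟩ := hconn.preconnected ⟨v, hvS⟩ ⟨w, hwS⟩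
  obtain ⟨x, -, hx1⟩ := walk_ivt_snd _ u.2 _ _ p (by simp; omega) (by simp; omega)
  obtain ⟨hxV, hxne⟩ := x.2
  have hxne' : (x : ℤ × ℤ) ≠ u := by simpa using hxne
  have hxeq : ∀ y : ℤ × ℤ, (x : ℤ × ℤ).1 = y.1 → (x : ℤ × ℤ).2 = y.2 → (x : ℤ × ℤ) = y :=
    fun y h1 h2 => Prod.ext_iff.2 ⟨h1, h2⟩
  have hx2 : (x : ℤ × ℤ).1 ≠ u.1 := by
    intro h; exact hxne' (hxeq u h hx1)
  have hxup : (x : ℤ × ℤ).1 ≠ u.1 + 1 := by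
    intro h
    have he : (x : ℤ × ℤ) = (u.1 + 1, u.2) := hxeq _ h hx1
    exact key 1 (Or.inl rfl) (he ▸ Finset.mem_coe.1 hxV)
  have hxdown : (x : ℤ × ℤ).1 ≠ u.1 - 1 := by
    intro h
    have he : (x : ℤ × ℤ) = (u.1 + (-1), u.2) := hxeq _ (by omega) hx1
    exact key (-1) (Or.inr rfl) (he ▸ Finset.mem_coe.1 hxV)
  rcases lt_or_gt_of_ne hx2 with hlt | hgt
  · have h0 : u + (0 : ℤ) • ((1 : ℤ), (0 : ℤ)) ∈ (V : Set (ℤ × ℤ)) := by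
      simpa using (Finset.mem_coe.2 hu)
    have hx : u + ((x : ℤ × ℤ).1 - u.1) • ((1 : ℤ), (0 : ℤ)) ∈ (V : Set (ℤ × ℤ)) := by
      have : u + ((x : ℤ × ℤ).1 - u.1) • ((1 : ℤ), (0 : ℤ)) = (x : ℤ × ℤ) := by
        simp [Prod.ext_iff]; omega
      rw [this]; exact hxV
    have := hlc (1, 0) (by simp) u ((x : ℤ × ℤ).1 - u.1) (-1) 0 (by omega) (by norm_num) hx h0
    have heq : u + (-1 : ℤ) • ((1 : ℤ), (0 : ℤ)) = (u.1 + (-1), u.2) := by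
      simp [Prod.ext_iff]
    rw [heq] at this
    exact key (-1) (Or.inr rfl) (Finset.mem_coe.1 this)
  · have h0 : u + (0 : ℤ) • ((1 : ℤ), (0 : ℤ)) ∈ (V : Set (ℤ × ℤ)) := by
      simpa using (Finset.mem_coe.2 hu)
    have hx : u + ((x : ℤ × ℤ).1 - u.1) • ((1 : ℤ), (0 : ℤ)) ∈ (V : Set (ℤ × ℤ)) := by
      have : u + ((x : ℤ × ℤ).1 - u.1) • ((1 : ℤ), (0 : ℤ)) = (x : ℤ × ℤ) := by
        simp [Prod.ext_iff]; omega
      rw [this]; exact hxV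
    have := hlc (1, 0) (by simp) u 0 1 ((x : ℤ × ℤ).1 - u.1) (by norm_num) (by omega) h0 hx
    have heq : u + (1 : ℤ) • ((1 : ℤ), (0 : ℤ)) = (u.1 + 1, u.2) := by
      simp [Prod.ext_iff]
    rw [heq] at this
    exact key 1 (Or.inl rfl) (Finset.mem_coe.1 this)

/-- In a 2-connected, linear-convex supergrid graph, every vertex has two neighbors
that are adjacent to each other, i.e. every vertex lies on a triangle. -/
theorem linearConvex_twoConnected_triangle (V : Finset (ℤ × ℤ))
    (hlc : LinearConvex (V : Set (ℤ × ℤ))) (h2c : TwoConnected V) :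
    ∀ u : (V : Set (ℤ × ℤ)), ∃ v w : (V : Set (ℤ × ℤ)),
      (Supergrid.induce (V : Set (ℤ × ℤ))).Adj u v ∧
      (Supergrid.induce (V : Set (ℤ × ℤ))).Adj u w ∧
      (Supergrid.induce (V : Set (ℤ × ℤ))).Adj v w := by
  intro u
  obtain ⟨h3, hconnV, hdel⟩ := h2c
  by_contra hcon
  simp only [not_exists, not_and] at hcon
  have hu : (u : ℤ × ℤ) ∈ V := Finset.mem_coe.1 u.2
  have H : ∀ a ∈ V, ∀ b ∈ V, Supergrid.Adj (u : ℤ × ℤ) a → Supergrid.Adj (u : ℤ × ℤ) b →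
      ¬ Supergrid.Adj a b := by
    intro a ha b hb h1 h2 h3'
    exact hcon ⟨a, Finset.mem_coe.2 ha⟩ ⟨b, Finset.mem_coe.2 hb⟩ h1 h2 h3'
  -- first neighbor v
  obtain ⟨b, hb, hbne⟩ := Finset.exists_mem_ne (s := V) (by omega) (u : ℤ × ℤ)
  have hbu : (⟨b, Finset.mem_coe.2 hb⟩ : (V : Set (ℤ × ℤ))) ≠ u := fun h => hbne (congrArg Subtype.val h)
  obtain ⟨p⟩ := hconnV.preconnected u ⟨b, Finset.mem_coe.2 hb⟩
  have hv : ∃ v : (V : Set (ℤ × ℤ)), Supergrid.Adj (u : ℤ × ℤ) (v : ℤ × ℤ) := by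
    cases p with
    | nil => exact absurd rfl hbu.symm
    | cons h q => exact ⟨_, h⟩
  obtain ⟨v', hav⟩ := hv
  set v : ℤ × ℤ := (v' : ℤ × ℤ) with hvdef
  have hvV : v ∈ V := Finset.mem_coe.1 v'.2
  -- second neighbor w, in V \ {v}
  have hconn2 := hdel v hvV
  have huS : (u : ℤ × ℤ) ∈ ((V : Set (ℤ × ℤ)) \ {v}) :=
    ⟨u.2, by simp; exact hav.1⟩
  obtain ⟨c, hc, hcne⟩ := Finset.exists_mem_ne
    (s := V.erase v) (by rw [Finset.card_erase_of_mem hvV]; omega) (u : ℤ × ℤ)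
  have hcS : c ∈ ((V : Set (ℤ × ℤ)) \ {v}) :=
    ⟨Finset.mem_coe.2 (Finset.mem_of_mem_erase hc), by simp [Finset.ne_of_mem_erase hc]⟩
  have hcu : (⟨c, hcS⟩ : ((V : Set (ℤ × ℤ)) \ {v} : Set (ℤ × ℤ))) ≠ ⟨(u : ℤ × ℤ), huS⟩ :=
    fun h => hcne (congrArg Subtype.val h)
  obtain ⟨q⟩ := hconn2.preconnected ⟨(u : ℤ × ℤ), huS⟩ ⟨c, hcS⟩
  have hw : ∃ w : ((V : Set (ℤ × ℤ)) \ {v} : Set (ℤ × ℤ)),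
      Supergrid.Adj (u : ℤ × ℤ) (w : ℤ × ℤ) := by
    cases q with
    | nil => exact absurd rfl hcu
    | cons h q' => exact ⟨_, h⟩
  obtain ⟨w', haw⟩ := hw
  set w : ℤ × ℤ := (w' : ℤ × ℤ) with hwdef
  obtain ⟨hwV', hwnv⟩ := w'.2
  have hwV : w ∈ V := Finset.mem_coe.1 hwV'
  have hwv : w ≠ v := by simpa using hwnv
  -- v and w are not adjacent
  have hnadj : ¬ Supergrid.Adj v w := H v hvV w hwV hav haw
  have hbv := supergrid_adj_bounds hav
  have hbw := supergrid_adj_bounds haw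
  have hsep : 2 ≤ |v.1 - w.1| ∨ 2 ≤ |v.2 - w.2| := by
    by_contra hno
    push_neg at hno
    exact hnadj ⟨fun h => hwv h.symm, by omega, by omega⟩
  have hsep' : v.1 - w.1 ≤ -2 ∨ 2 ≤ v.1 - w.1 ∨ v.2 - w.2 ≤ -2 ∨ 2 ≤ v.2 - w.2 := by
    rcases hsep with h | h
    · rcases le_abs.1 h with h' | h'
      · right; left; omega
      · left; omega
    · rcases le_abs.1 h with h' | h'
      · right; right; right; omega
      · right; right; left; omega
  have hconnU := hdel (u : ℤ × ℤ) hu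
  rcases hsep' with h | h | h | h
  · exact main_x V hlc (u : ℤ × ℤ) v w hu hvV hwV hconnU H hav haw (by omega) (by omega)
  · exact main_x V hlc (u : ℤ × ℤ) w v hu hwV hvV hconnU H haw hav (by omega) (by omega)
  · exact main_y V hlc (u : ℤ × ℤ) v w hu hvV hwV hconnU H hav haw (by omega) (by omega)
  · exact main_y V hlc (u : ℤ × ℤ) w v hu hwV hvV hconnU H haw hav (by omega) (by omega)
end
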